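/- Let G be a POMDP with absorbing target set T, positive costs, and Supp(λ0) ∈ BeliefWin(G,T). Then optCost ≤ U_Allow, where U_Allow is the maximum over all U ∈ BeliefWin(G,T) and s ∈ U of the expected total cost of the strategy σ_Allow started in state s with initial belief-support U. -/

import Mathlib

open Finset Filter
open scoped Classical

set_option linter.unusedSectionVars false

noncomputable section

/-- A finite history of a play: the current state together with the
(reversed) list of past steps; an entry `(a, s')` means: the action `a`
was taken from the state `s'` (leading to the next recorded state). -/
abbrev Hist (S A : Type) := S × List (A × S)

/-- The observation–action sequence of a history. -/
def obsHist {S A Z : Type} (O : S → Z) (h : Hist S A) : Z × List (A × Z) :=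
  (O h.1, h.2.map fun p => (p.1, O p.2))

/-- An observation-based (randomized, history-dependent) strategy. -/
structure Strategy (S A Z : Type) [Fintype A] (O : S → Z) where
  act : Hist S A → A → ℝ
  act_nonneg : ∀ h a, 0 ≤ act h a
  act_sum : ∀ h, ∑ a, act h a = 1
  obsBased : ∀ h h', obsHist O h = obsHist O h' → act h = act h'

/-- A partially observable Markov decision process. -/
structure POMDP (S A Z : Type) [Fintype S] [Fintype A] [Fintype Z] where
  δ : S → A → S → ℝ
  δ_nonneg : ∀ s a s', 0 ≤ δ s a s'
  δ_sum : ∀ s a, ∑ s', δ s a s' = 1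
  obs : S → Z
  init : S → ℝ
  init_nonneg : ∀ s, 0 ≤ init s
  init_sum : ∑ s, init s = 1
  init_obs : ∀ s s', 0 < init s → 0 < init s' → obs s = obs s'

namespace POMDP

variable {S A Z : Type} [Fintype S] [Fintype A] [Fintype Z]

/-- The target set `T` consists of absorbing states. -/
def Absorbing (M : POMDP S A Z) (T : Set S) : Prop :=
  ∀ t ∈ T, ∀ a, M.δ t a t = 1

/-- Probability that after `n` steps the process has followed exactly the
history `(s, l)` (so `l` has length `n`). -/
def hprobAux (M : POMDP S A Z) (σ : Strategy S A Z M.obs) : ℕ → S → List (A × S) → ℝ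
  | 0, s, l => if l = [] then M.init s else 0
  | n+1, s, l =>
    match l with
    | [] => 0
    | (a, s') :: rest => hprobAux M σ n s' rest * σ.act (s', rest) a * M.δ s' a s

def hprob (M : POMDP S A Z) (σ : Strategy S A Z M.obs) (n : ℕ) (h : Hist S A) : ℝ :=
  M.hprobAux σ n h.1 h.2

/-- The state sequence of a history visits the set `T`. -/
def visitsT (T : Set S) (h : Hist S A) : Prop :=
  h.1 ∈ T ∨ ∃ p ∈ h.2, p.2 ∈ T

/-- Probability of reaching `T` within the first `n` steps. -/
def probReachBy (M : POMDP S A Z) (T : Set S) (σ : Strategy S A Z M.obs) (n : ℕ) : ℝ :=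
  ∑' h : Hist S A, if visitsT T h then M.hprob σ n h else 0

/-- Probability of the reachability objective `Reach(T)`. -/
def probReach (M : POMDP S A Z) (T : Set S) (σ : Strategy S A Z M.obs) : ℝ :=
  ⨆ n, M.probReachBy T σ n

/-- The strategy `σ` is almost-sure winning for `Reach(T)`. -/
def AlmostSure (M : POMDP S A Z) (T : Set S) (σ : Strategy S A Z M.obs) : Prop :=
  M.probReach T σ = 1

/-- Accumulated cost along a history. -/
def totalCostAux (c : S → A → ℝ) : S → List (A × S) → ℝ
  | _, [] => 0
  | _, (a, s') :: rest => totalCostAux c s' rest + c s' a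

def totalCostH (c : S → A → ℝ) (h : Hist S A) : ℝ := totalCostAux c h.1 h.2

/-- Expected total cost of the first `n` steps, i.e. `E[Total_{n-1}]`
(in particular `E[Total_k] = expTotalSteps M c σ (k+1)`). -/
def expTotalSteps (M : POMDP S A Z) (c : S → A → ℝ) (σ : Strategy S A Z M.obs) (n : ℕ) : ℝ :=
  ∑' h : Hist S A, M.hprob σ n h * totalCostH c h

/-- The value `Val(σ) = E[Total]` of a strategy, as the limit (limsup) of the
expected costs of the finite prefixes. -/
def Val (M : POMDP S A Z) (c : S → A → ℝ) (σ : Strategy S A Z M.obs) : EReal :=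
  Filter.limsup (fun n => ((M.expTotalSteps c σ n : ℝ) : EReal)) Filter.atTop

/-- `optCost`: the infimum of the values of almost-sure winning strategies. -/
def optCost (M : POMDP S A Z) (T : Set S) (c : S → A → ℝ) : EReal :=
  ⨅ σ : {σ : Strategy S A Z M.obs // M.AlmostSure T σ}, M.Val c σ.1

end POMDP

namespace POMDP

variable {S A Z : Type} [Fintype S] [Fintype A] [Fintype Z]

/-- Uniform distribution over a finite set of states. -/
def uniformS (U : Finset S) : S → ℝ := fun s => if s ∈ U then ((U.card : ℝ))⁻¹ else 0

lemma uniformS_nonneg (U : Finset S) (s : S) : 0 ≤ uniformS U s := by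
  unfold uniformS; split_ifs <;> positivity

lemma uniformS_sum (U : Finset S) (h : U.Nonempty) : ∑ s, uniformS U s = 1 := by
  unfold uniformS
  rw [Finset.sum_ite_mem, Finset.univ_inter, Finset.sum_const, nsmul_eq_mul,
    mul_inv_cancel₀]
  exact_mod_cast Finset.card_ne_zero.mpr h

lemma uniformS_mem {U : Finset S} {s : S} (h : 0 < uniformS U s) : s ∈ U := by
  by_contra hc; simp [uniformS, hc] at h

/-- The POMDP `M` with the initial distribution replaced by the uniform
distribution over `U`. -/
def reinit (M : POMDP S A Z) (U : Finset S) (hU : U.Nonempty)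
    (hobs : ∀ s ∈ U, ∀ s' ∈ U, M.obs s = M.obs s') : POMDP S A Z :=
  { M with
    init := uniformS U
    init_nonneg := uniformS_nonneg U
    init_sum := uniformS_sum U hU
    init_obs := fun s s' hs hs' => hobs s (uniformS_mem hs) s' (uniformS_mem hs') }

/-- The POMDP `M` with the initial distribution replaced by the Dirac
distribution at `s0`. -/
def resetDirac (M : POMDP S A Z) (s0 : S) : POMDP S A Z :=
  { M with
    init := fun s => if s = s0 then 1 else 0
    init_nonneg := by intro s; split_ifs <;> norm_num
    init_sum := by simp
    init_obs := by
      intro s s' hs hs'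
      have h1 : s = s0 := by by_contra hc; simp [hc] at hs
      have h2 : s' = s0 := by by_contra hc; simp [hc] at hs'
      rw [h1, h2] }

/-- The set of almost-sure winning belief-supports: those `U` from which
(with the uniform initial distribution on `U`) some strategy wins
`Reach(T)` almost-surely. -/
def BeliefWin (M : POMDP S A Z) (T : Set S) : Set (Finset S) :=
  {U | ∃ (hU : U.Nonempty) (hobs : ∀ s ∈ U, ∀ s' ∈ U, M.obs s = M.obs s'),
      ∃ σ : Strategy S A Z M.obs, (M.reinit U hU hobs).AlmostSure T σ}

/-- Belief-support update. -/
def updateF (M : POMDP S A Z) (U : Finset S) (z : Z) (a : A) : Finset S :=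
  univ.filter (fun t => M.obs t = z ∧ ∃ s ∈ U, 0 < M.δ s a t)

/-- Allowed actions at a belief-support `U`. -/
def AllowSet (M : POMDP S A Z) (T : Set S) (U : Finset S) : Set A :=
  {a | ∀ z, (M.updateF U z a).Nonempty → M.updateF U z a ∈ M.BeliefWin T}

def allowFin (M : POMDP S A Z) (T : Set S) (U : Finset S) : Finset A :=
  univ.filter (· ∈ M.AllowSet T U)

/-- The support of the initial distribution, as a belief-support. -/
def suppInitF (M : POMDP S A Z) : Finset S := univ.filter (fun s => 0 < M.init s)

/-- Belief-support after a history, starting from the initial belief-support `U0`. -/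
def beliefOfFromAux (M : POMDP S A Z) (U0 : Finset S) : S → List (A × S) → Finset S
  | s, [] => U0.filter (fun t => M.obs t = M.obs s)
  | s, (a, s') :: rest => M.updateF (M.beliefOfFromAux U0 s' rest) (M.obs s) a

def beliefOfFrom (M : POMDP S A Z) (U0 : Finset S) (h : Hist S A) : Finset S :=
  M.beliefOfFromAux U0 h.1 h.2

/-- Belief-support after a history (with the initial belief-support being
the support of the initial distribution). -/
def beliefOf (M : POMDP S A Z) (h : Hist S A) : Finset S :=
  M.beliefOfFrom M.suppInitF h

lemma beliefOfFromAux_obs (M : POMDP S A Z) (U0 : Finset S) :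
    ∀ (l l' : List (A × S)) (s s' : S),
      l.map (fun p => (p.1, M.obs p.2)) = l'.map (fun p => (p.1, M.obs p.2)) →
      M.obs s = M.obs s' →
      M.beliefOfFromAux U0 s l = M.beliefOfFromAux U0 s' l'
  | [], [], s, s', _, hs => by simp [beliefOfFromAux, hs]
  | [], (_ :: _), _, _, hmap, _ => by simp at hmap
  | (_ :: _), [], _, _, hmap, _ => by simp at hmap
  | ((a, t) :: r), ((a', t') :: r'), s, s', hmap, hs => by
      simp only [List.map_cons, List.cons.injEq, Prod.mk.injEq] at hmap
      obtain ⟨⟨ha, ht⟩, hr⟩ := hmap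
      simp only [beliefOfFromAux]
      rw [M.beliefOfFromAux_obs U0 r r' t t' hr ht, hs, ha]

/-- Uniform distribution over a finite set of actions. -/
def uniformA (F : Finset A) : A → ℝ := fun a => if a ∈ F then ((F.card : ℝ))⁻¹ else 0

lemma uniformA_nonneg (F : Finset A) (a : A) : 0 ≤ uniformA F a := by
  unfold uniformA; split_ifs <;> positivity

lemma uniformA_sum (F : Finset A) (h : F.Nonempty) : ∑ a, uniformA F a = 1 := by
  unfold uniformA
  rw [Finset.sum_ite_mem, Finset.univ_inter, Finset.sum_const, nsmul_eq_mul,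
    mul_inv_cancel₀]
  exact_mod_cast Finset.card_ne_zero.mpr h

/-- The action distribution of `σ_Allow` (with initial belief-support `U0`):
uniform over the allowed actions of the current belief-support (with a
uniform fallback where no action is allowed). -/
def actAllowFrom (M : POMDP S A Z) (T : Set S) (U0 : Finset S) (h : Hist S A) : A → ℝ :=
  if (M.allowFin T (M.beliefOfFrom U0 h)).Nonempty
  then uniformA (M.allowFin T (M.beliefOfFrom U0 h))
  else uniformA (univ : Finset A)

/-- The belief-support based strategy `σ_Allow` (tracking beliefs from `U0`). -/
def stratAllowFrom [Nonempty A] (M : POMDP S A Z) (T : Set S) (U0 : Finset S) :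
    Strategy S A Z M.obs where
  act := M.actAllowFrom T U0
  act_nonneg := by
    intro h a; unfold actAllowFrom; split_ifs <;> exact uniformA_nonneg _ _
  act_sum := by
    intro h; unfold actAllowFrom; split_ifs with hne
    · exact uniformA_sum _ hne
    · exact uniformA_sum _ univ_nonempty
  obsBased := by
    intro h h' hobs
    have : M.beliefOfFrom U0 h = M.beliefOfFrom U0 h' := by
      unfold beliefOfFrom
      exact M.beliefOfFromAux_obs U0 h.2 h'.2 h.1 h'.1
        (congrArg Prod.snd hobs) (congrArg Prod.fst hobs)
    unfold actAllowFrom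
    rw [this]

/-- `σ_Allow`. -/
def stratAllow [Nonempty A] (M : POMDP S A Z) (T : Set S) : Strategy S A Z M.obs :=
  M.stratAllowFrom T M.suppInitF

/-- `T_Allow(s, U)`: the expected total cost of `σ_Allow` started in the
state `s` with the initial belief-support `U`. -/
def TAllow [Nonempty A] (M : POMDP S A Z) (T : Set S) (c : S → A → ℝ) (s : S) (U : Finset S) :
    EReal :=
  (M.resetDirac s).Val c (M.stratAllowFrom T U)

/-- `U_Allow`: the maximal expected total cost of `σ_Allow` over all
almost-sure winning belief-supports `U` and states `s ∈ U`. -/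
def UAllow [Nonempty A] (M : POMDP S A Z) (T : Set S) (c : S → A → ℝ) : EReal :=
  ⨆ U ∈ M.BeliefWin T, ⨆ s ∈ U, M.TAllow T c s U

end POMDP

namespace POMDP

variable {S A Z : Type} [Fintype S] [Fintype A] [Fintype Z]

/-- Normalization of a nonnegative function into a distribution. -/
def normalize (f : S → ℝ) : S → ℝ := fun t => f t / ∑ u, f u

/-- Support of an information state. -/
def suppF (b : S → ℝ) : Finset S := univ.filter (fun s => b s ≠ 0)

/-- The information state (posterior distribution) after a history. -/
def infoOfAux (M : POMDP S A Z) : S → List (A × S) → S → ℝ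
  | s, [] => normalize (fun t => if M.obs t = M.obs s then M.init t else 0)
  | s, (a, s') :: rest =>
      normalize (fun t => if M.obs t = M.obs s then ∑ u, M.infoOfAux s' rest u * M.δ u a t else 0)

def infoOf (M : POMDP S A Z) (h : Hist S A) : S → ℝ := M.infoOfAux h.1 h.2

lemma infoOfAux_obs (M : POMDP S A Z) :
    ∀ (l l' : List (A × S)) (s s' : S),
      l.map (fun p => (p.1, M.obs p.2)) = l'.map (fun p => (p.1, M.obs p.2)) →
      M.obs s = M.obs s' →
      M.infoOfAux s l = M.infoOfAux s' l'
  | [], [], s, s', _, hs => by simp [infoOfAux, hs]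
  | [], (_ :: _), _, _, hmap, _ => by simp at hmap
  | (_ :: _), [], _, _, hmap, _ => by simp at hmap
  | ((a, t) :: r), ((a', t') :: r'), s, s', hmap, hs => by
      simp only [List.map_cons, List.cons.injEq, Prod.mk.injEq] at hmap
      obtain ⟨⟨ha, ht⟩, hr⟩ := hmap
      simp only [infoOfAux]
      rw [M.infoOfAux_obs r r' t t' hr ht, hs, ha]

/-- Expected one-step cost `c'(b,a)` at an information state. -/
def cinfo (c : S → A → ℝ) (b : S → ℝ) (a : A) : ℝ := ∑ s, b s * c s a

/-- Probability of observing `z` after playing `a` at information state `b`. -/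
def obsProb (M : POMDP S A Z) (b : S → ℝ) (a : A) (z : Z) : ℝ :=
  ∑ t, if M.obs t = z then ∑ u, b u * M.δ u a t else 0

/-- Bayesian update of the information state `b` under action `a` and
observation `z`. -/
def postInfo (M : POMDP S A Z) (b : S → ℝ) (a : A) (z : Z) : S → ℝ :=
  normalize (fun t => if M.obs t = z then ∑ u, b u * M.δ u a t else 0)

/-- The allowed-action-restricted finite-horizon value iteration `V*_n`. -/
def Vstar (M : POMDP S A Z) (T : Set S) (c : S → A → ℝ) : ℕ → (S → ℝ) → ℝ
  | 0, _ => 0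
  | n+1, b =>
    if h : (M.allowFin T (suppF b)).Nonempty then
      (M.allowFin T (suppF b)).inf' h
        (fun a => cinfo c b a + ∑ z, M.obsProb b a z * M.Vstar T c n (M.postInfo b a z))
    else 0

/-- An allowed action attaining the minimum of the value iteration with
`n` steps remaining at information state `b`. -/
def foAct [Nonempty A] (M : POMDP S A Z) (T : Set S) (c : S → A → ℝ) : ℕ → (S → ℝ) → A
  | 0, _ => Classical.arbitrary A
  | n+1, b =>
    if h : (M.allowFin T (suppF b)).Nonempty then
      Classical.choose (Finset.exists_mem_eq_inf' h
        (fun a => cinfo c b a + ∑ z, M.obsProb b a z * M.Vstar T c n (M.postInfo b a z)))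
    else Classical.arbitrary A

/-- The action distribution of the finite-horizon optimal strategy `σFO_k`. -/
def actFO [Nonempty A] (M : POMDP S A Z) (T : Set S) (c : S → A → ℝ) (k : ℕ) (h : Hist S A) :
    A → ℝ :=
  fun a => if a = M.foAct T c (k - h.2.length) (M.infoOf h) then 1 else 0

lemma length_eq_of_obsHist {h h' : Hist S A} {O : S → Z} (he : obsHist O h = obsHist O h') :
    h.2.length = h'.2.length := by
  have := congrArg (fun x => (Prod.snd x).length) he
  simpa [obsHist] using this

/-- The (allowed-action-restricted) finite-horizon optimal strategy `σFO_k`. -/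
def stratFO [Nonempty A] (M : POMDP S A Z) (T : Set S) (c : S → A → ℝ) (k : ℕ) :
    Strategy S A Z M.obs where
  act := M.actFO T c k
  act_nonneg := by intro h a; unfold actFO; split_ifs <;> norm_num
  act_sum := by intro h; unfold actFO; simp
  obsBased := by
    intro h h' hobs
    have hlen : h.2.length = h'.2.length := length_eq_of_obsHist hobs
    have hinfo : M.infoOf h = M.infoOf h' := by
      unfold infoOf
      exact M.infoOfAux_obs h.2 h'.2 h.1 h'.1
        (congrArg Prod.snd hobs) (congrArg Prod.fst hobs)
    unfold actFO
    rw [hlen, hinfo]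

/-- The strategy `σ*_k`: play `σFO_k` for the first `k` steps, then `σ_Allow`. -/
def stratStar [Nonempty A] (M : POMDP S A Z) (T : Set S) (c : S → A → ℝ) (k : ℕ) :
    Strategy S A Z M.obs where
  act := fun h =>
    if h.2.length < k then M.actFO T c k h else M.actAllowFrom T M.suppInitF h
  act_nonneg := by
    intro h a; split_ifs with hl
    · exact (M.stratFO T c k).act_nonneg h a
    · exact (M.stratAllowFrom T M.suppInitF).act_nonneg h a
  act_sum := by
    intro h; split_ifs with hl
    · exact (M.stratFO T c k).act_sum h
    · exact (M.stratAllowFrom T M.suppInitF).act_sum h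
  obsBased := by
    intro h h' hobs
    have hlen : h.2.length = h'.2.length := length_eq_of_obsHist hobs
    rw [hlen]
    split_ifs with hl
    · exact (M.stratFO T c k).obsBased h h' hobs
    · exact (M.stratAllowFrom T M.suppInitF).obsBased h h' hobs

/-- `α_k`: the probability that `T` is not reached within the first `k`
steps when playing `σ*_k`. -/
def alphaK [Nonempty A] (M : POMDP S A Z) (T : Set S) (c : S → A → ℝ) (k : ℕ) : ℝ :=
  1 - M.probReachBy T (M.stratStar T c k) k

end POMDP

namespace POMDP

variable {S A Z : Type} [Fintype S] [Fintype A] [Fintype Z]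

@[simp] lemma resetDirac_δ (M : POMDP S A Z) (s0 : S) : (M.resetDirac s0).δ = M.δ := rfl
@[simp] lemma resetDirac_obs (M : POMDP S A Z) (s0 : S) : (M.resetDirac s0).obs = M.obs := rfl
@[simp] lemma resetDirac_init (M : POMDP S A Z) (s0 : S) :
    (M.resetDirac s0).init = fun s => if s = s0 then 1 else 0 := rfl

/-- Lists of a given length over `A × S`. -/
def listsLen (A S : Type) [Fintype A] [Fintype S] : ℕ → Finset (List (A × S))
  | 0 => {([] : List (A × S))}
  | n+1 => ((Finset.univ : Finset (A × S)) ×ˢ listsLen A S n).image fun p => p.1 :: p.2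

lemma mem_listsLen : ∀ (n : ℕ) (l : List (A × S)), l ∈ listsLen A S n ↔ l.length = n
  | 0, l => by simp [listsLen, List.length_eq_zero_iff]
  | n+1, [] => by simp [listsLen]
  | n+1, p :: r => by
      simp only [listsLen, Finset.mem_image, Finset.mem_product, Finset.mem_univ, true_and,
        List.length_cons, Nat.add_right_cancel_iff]
      constructor
      · rintro ⟨⟨q, t⟩, ht, h⟩
        injection h with h1 h2
        subst h1; subst h2
        exact (mem_listsLen n t).1 ht
      · intro h
        exact ⟨(p, r), (mem_listsLen n r).2 h, rfl⟩

/-- The finite set of histories of length `n`. -/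
def HFin (S A : Type) [Fintype S] [Fintype A] : ℕ → Finset (Hist S A) :=
  fun n => (Finset.univ : Finset S) ×ˢ listsLen A S n

lemma mem_HFin {n : ℕ} {h : Hist S A} : h ∈ HFin S A n ↔ h.2.length = n := by
  cases h; simp [HFin, mem_listsLen]

lemma hprobAux_len (M : POMDP S A Z) (σ : Strategy S A Z M.obs) :
    ∀ (n : ℕ) (s : S) (l : List (A × S)), l.length ≠ n → M.hprobAux σ n s l = 0
  | 0, s, [], h => by simp at h
  | 0, s, p :: r, h => by simp [hprobAux]
  | n+1, s, [], h => by simp [hprobAux]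
  | n+1, s, (a, s') :: r, h => by
      have hr : r.length ≠ n := by simpa using h
      simp [hprobAux, hprobAux_len M σ n s' r hr]

lemma hprobAux_nonneg (M : POMDP S A Z) (σ : Strategy S A Z M.obs) :
    ∀ (n : ℕ) (s : S) (l : List (A × S)), 0 ≤ M.hprobAux σ n s l
  | 0, s, [] => by simpa [hprobAux] using M.init_nonneg s
  | 0, s, p :: r => by simp [hprobAux]
  | n+1, s, [] => by simp [hprobAux]
  | n+1, s, (a, s') :: r => by
      simp only [hprobAux]
      exact mul_nonneg (mul_nonneg (hprobAux_nonneg M σ n s' r) (σ.act_nonneg _ a))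
        (M.δ_nonneg s' a s)

lemma hprob_nonneg (M : POMDP S A Z) (σ : Strategy S A Z M.obs) (n : ℕ) (h : Hist S A) :
    0 ≤ M.hprob σ n h := hprobAux_nonneg M σ n h.1 h.2

lemma sum_hprob (M : POMDP S A Z) (σ : Strategy S A Z M.obs) :
    ∀ n : ℕ, ∑ h ∈ HFin S A n, M.hprob σ n h = 1
  | 0 => by
      rw [show HFin S A 0 = (Finset.univ : Finset S) ×ˢ listsLen A S 0 from rfl,
        Finset.sum_product]
      simpa [listsLen, hprob, hprobAux] using M.init_sum
  | n+1 => by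
      have hinj : ∀ x ∈ (Finset.univ : Finset (A × S)) ×ˢ listsLen A S n,
          ∀ y ∈ (Finset.univ : Finset (A × S)) ×ˢ listsLen A S n,
          x.1 :: x.2 = y.1 :: y.2 → x = y := by
        rintro ⟨p, r⟩ - ⟨q, t⟩ - h
        simpa [Prod.ext_iff] using h
      calc ∑ h ∈ HFin S A (n+1), M.hprob σ (n+1) h
          = ∑ s : S, ∑ l ∈ listsLen A S (n+1), M.hprobAux σ (n+1) s l := by
            rw [show HFin S A (n+1) = (Finset.univ : Finset S) ×ˢ listsLen A S (n+1) from rfl,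
              Finset.sum_product]
            rfl
        _ = ∑ s : S, ∑ q ∈ (Finset.univ : Finset (A × S)) ×ˢ listsLen A S n,
              M.hprobAux σ (n+1) s (q.1 :: q.2) := by
            refine Finset.sum_congr rfl fun s _ => ?_
            rw [show listsLen A S (n+1)
                = ((Finset.univ : Finset (A × S)) ×ˢ listsLen A S n).image
                    (fun p => p.1 :: p.2) from rfl,
              Finset.sum_image hinj]
        _ = ∑ q ∈ (Finset.univ : Finset (A × S)) ×ˢ listsLen A S n,
              ∑ s : S, M.hprobAux σ (n+1) s (q.1 :: q.2) := Finset.sum_comm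
        _ = ∑ q ∈ (Finset.univ : Finset (A × S)) ×ˢ listsLen A S n,
              M.hprobAux σ n q.1.2 q.2 * σ.act (q.1.2, q.2) q.1.1 := by
            refine Finset.sum_congr rfl fun q _ => ?_
            obtain ⟨⟨a, s'⟩, r⟩ := q
            simp only [hprobAux]
            rw [← Finset.mul_sum, M.δ_sum, mul_one]
        _ = ∑ p : A × S, ∑ r ∈ listsLen A S n,
              M.hprobAux σ n p.2 r * σ.act (p.2, r) p.1 := by
            rw [Finset.sum_product]
        _ = ∑ s' : S, ∑ r ∈ listsLen A S n,
              M.hprobAux σ n s' r * ∑ a : A, σ.act (s', r) a := by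
            rw [Fintype.sum_prod_type, Finset.sum_comm]
            refine Finset.sum_congr rfl fun s' _ => ?_
            rw [Finset.sum_comm]
            exact Finset.sum_congr rfl fun r _ => by rw [Finset.mul_sum]
        _ = 1 := by
            have h1 := sum_hprob M σ n
            rw [show HFin S A n = (Finset.univ : Finset S) ×ˢ listsLen A S n from rfl,
              Finset.sum_product] at h1
            simpa [σ.act_sum, hprob] using h1

lemma hprobAux_dirac (M : POMDP S A Z) (σ : Strategy S A Z M.obs) :
    ∀ (n : ℕ) (s : S) (l : List (A × S)),
      M.hprobAux σ n s l = ∑ s0 : S, M.init s0 * (M.resetDirac s0).hprobAux σ n s l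
  | 0, s, [] => by
      simp [hprobAux, resetDirac_init, mul_ite, Finset.sum_ite_eq]
  | 0, s, p :: r => by simp [hprobAux]
  | n+1, s, [] => by simp [hprobAux]
  | n+1, s, (a, s') :: r => by
      simp only [hprobAux]
      rw [hprobAux_dirac M σ n s' r, Finset.sum_mul, Finset.sum_mul]
      exact Finset.sum_congr rfl fun s0 _ => by
        show M.init s0 * (M.resetDirac s0).hprobAux σ n s' r * σ.act (s', r) a * M.δ s' a s
          = M.init s0 * ((M.resetDirac s0).hprobAux σ n s' r * σ.act (s', r) a * M.δ s' a s)
        ring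

lemma expTotalSteps_eq_sum (M : POMDP S A Z) (c : S → A → ℝ) (σ : Strategy S A Z M.obs)
    (n : ℕ) : M.expTotalSteps c σ n
      = ∑ h ∈ HFin S A n, M.hprob σ n h * totalCostH c h := by
  refine tsum_eq_sum fun h hh => ?_
  rw [show M.hprob σ n h = 0 from hprobAux_len M σ n h.1 h.2 (by simpa [mem_HFin] using hh),
    zero_mul]

lemma probReachBy_eq_sum (M : POMDP S A Z) (T : Set S) (σ : Strategy S A Z M.obs) (n : ℕ) :
    M.probReachBy T σ n
      = ∑ h ∈ HFin S A n, if visitsT T h then M.hprob σ n h else 0 := by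
  refine tsum_eq_sum fun h hh => ?_
  rw [show M.hprob σ n h = 0 from hprobAux_len M σ n h.1 h.2 (by simpa [mem_HFin] using hh)]
  simp

lemma expTotalSteps_dirac (M : POMDP S A Z) (c : S → A → ℝ) (σ : Strategy S A Z M.obs)
    (n : ℕ) : M.expTotalSteps c σ n
      = ∑ s0 : S, M.init s0 * (M.resetDirac s0).expTotalSteps c σ n := by
  rw [expTotalSteps_eq_sum]
  have : ∀ s0 : S, (M.resetDirac s0).expTotalSteps c σ n
      = ∑ h ∈ HFin S A n, (M.resetDirac s0).hprob σ n h * totalCostH c h := fun s0 =>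
    expTotalSteps_eq_sum (M.resetDirac s0) c σ n
  simp_rw [this, Finset.mul_sum]
  rw [Finset.sum_comm]
  refine Finset.sum_congr rfl fun h _ => ?_
  rw [show M.hprob σ n h = ∑ s0 : S, M.init s0 * (M.resetDirac s0).hprob σ n h from
    hprobAux_dirac M σ n h.1 h.2, Finset.sum_mul]
  exact Finset.sum_congr rfl fun s0 _ => by ring

lemma totalCostAux_nonneg {c : S → A → ℝ} (hc : ∀ s a, 0 ≤ c s a) :
    ∀ (s : S) (l : List (A × S)), 0 ≤ totalCostAux c s l
  | s, [] => le_rfl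
  | s, (a, s') :: r => add_nonneg (totalCostAux_nonneg hc s' r) (hc s' a)

lemma totalCostAux_ge {c : S → A → ℝ} {T : Set S} (hc1 : ∀ s ∉ T, ∀ a, 1 ≤ c s a) :
    ∀ (s : S) (l : List (A × S)), (∀ p ∈ l, p.2 ∉ T) →
      (l.length : ℝ) ≤ totalCostAux c s l
  | s, [], _ => by simp [totalCostAux]
  | s, (a, s') :: r, hl => by
      have h1 : (r.length : ℝ) ≤ totalCostAux c s' r :=
        totalCostAux_ge hc1 s' r fun p hp => hl p (List.mem_cons_of_mem _ hp)
      have h2 : 1 ≤ c s' a := hc1 s' (hl (a, s') List.mem_cons_self) a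
      show ((r.length + 1 : ℕ) : ℝ) ≤ totalCostAux c s' r + c s' a
      push_cast
      linarith

lemma expTotalSteps_nonneg (M : POMDP S A Z) (c : S → A → ℝ) (σ : Strategy S A Z M.obs)
    (hc : ∀ s a, 0 ≤ c s a) (n : ℕ) : 0 ≤ M.expTotalSteps c σ n := by
  rw [expTotalSteps_eq_sum]
  exact Finset.sum_nonneg fun h _ =>
    mul_nonneg (hprob_nonneg M σ n h) (totalCostAux_nonneg hc h.1 h.2)

lemma probReachBy_le_one (M : POMDP S A Z) (T : Set S) (σ : Strategy S A Z M.obs) (n : ℕ) :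
    M.probReachBy T σ n ≤ 1 := by
  rw [probReachBy_eq_sum, ← sum_hprob M σ n]
  refine Finset.sum_le_sum fun h _ => ?_
  split_ifs
  · exact le_rfl
  · exact hprob_nonneg M σ n h

lemma expTotalSteps_key (M : POMDP S A Z) (T : Set S) (c : S → A → ℝ)
    (σ : Strategy S A Z M.obs) (hc : ∀ s a, 0 ≤ c s a) (hc1 : ∀ s ∉ T, ∀ a, 1 ≤ c s a)
    (n : ℕ) : (n : ℝ) * (1 - M.probReachBy T σ n) ≤ M.expTotalSteps c σ n := by
  rw [expTotalSteps_eq_sum, probReachBy_eq_sum, mul_sub, ← sum_hprob M σ n, Finset.mul_sum,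
    Finset.mul_sum, ← Finset.sum_sub_distrib]
  refine Finset.sum_le_sum fun h hh => ?_
  by_cases hv : visitsT T h
  · rw [if_pos hv, sub_self]
    exact mul_nonneg (hprob_nonneg M σ n h) (totalCostAux_nonneg hc h.1 h.2)
  · rw [if_neg hv, mul_zero, sub_zero]
    have hlen : h.2.length = n := mem_HFin.1 hh
    have hnv : ∀ p ∈ h.2, p.2 ∉ T := by
      intro p hp hpT
      exact hv (Or.inr ⟨p, hp, hpT⟩)
    have htot : (n : ℝ) ≤ totalCostH c h := by
      rw [← hlen]; exact totalCostAux_ge hc1 h.1 h.2 hnv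
    calc (n : ℝ) * M.hprob σ n h = M.hprob σ n h * n := mul_comm _ _
      _ ≤ M.hprob σ n h * totalCostH c h :=
          mul_le_mul_of_nonneg_left htot (hprob_nonneg M σ n h)

lemma val_nonneg (M : POMDP S A Z) (c : S → A → ℝ) (σ : Strategy S A Z M.obs)
    (hc : ∀ s a, 0 ≤ c s a) : (0 : EReal) ≤ M.Val c σ := by
  refine Filter.le_limsup_of_frequently_le (Filter.Eventually.frequently
    (Filter.Eventually.of_forall fun n => ?_))
  exact_mod_cast expTotalSteps_nonneg M c σ hc n

lemma almostSure_of_val_lt_top (M : POMDP S A Z) (T : Set S) (c : S → A → ℝ)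
    (σ : Strategy S A Z M.obs) (hc : ∀ s a, 0 ≤ c s a) (hc1 : ∀ s ∉ T, ∀ a, 1 ≤ c s a)
    (hval : M.Val c σ < ⊤) : M.AlmostSure T σ := by
  unfold AlmostSure probReach
  have hbdd : BddAbove (Set.range fun n => M.probReachBy T σ n) :=
    ⟨1, by rintro x ⟨n, rfl⟩; exact probReachBy_le_one M T σ n⟩
  refine le_antisymm (ciSup_le fun n => probReachBy_le_one M T σ n) ?_
  by_contra hlt
  push_neg at hlt
  set r := ⨆ n, M.probReachBy T σ n with hr
  have hrn : ∀ n, M.probReachBy T σ n ≤ r := fun n => le_ciSup hbdd n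
  have h1r : 0 < 1 - r := by linarith
  obtain ⟨z, hz1, hz2⟩ := EReal.exists_between_coe_real hval
  have hge : (z : EReal) ≤ M.Val c σ := by
    refine Filter.le_limsup_of_frequently_le (Filter.Eventually.frequently ?_)
    have htend : Filter.Tendsto (fun n : ℕ => (n : ℝ) * (1 - r)) atTop atTop :=
      tendsto_natCast_atTop_atTop.atTop_mul_const h1r
    filter_upwards [htend.eventually_ge_atTop z] with n hn
    have hk := expTotalSteps_key M T c σ hc hc1 n
    have h2 : (n : ℝ) * (1 - r) ≤ (n : ℝ) * (1 - M.probReachBy T σ n) :=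
      mul_le_mul_of_nonneg_left (by linarith [hrn n]) n.cast_nonneg
    exact_mod_cast le_trans hn (le_trans h2 hk)
  exact absurd (lt_of_le_of_lt hge hz1) (lt_irrefl _)

end POMDP

set_option maxHeartbeats 1000000 in
/-- `optCost ≤ U_Allow`. -/
theorem optCost_le_UAllow
    {S A Z : Type} [Fintype S] [Fintype A] [Fintype Z] [Nonempty A]
    (M : POMDP S A Z) (T : Set S) (c : S → A → ℝ)
    (habs : M.Absorbing T)
    (hc0 : ∀ t ∈ T, ∀ a, c t a = 0)
    (hc1 : ∀ s ∉ T, ∀ a, 1 ≤ c s a)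
    (hinit : M.suppInitF ∈ M.BeliefWin T) :
    M.optCost T c ≤ M.UAllow T c := by
  by_cases htop : M.UAllow T c = ⊤
  · rw [htop]; exact le_top
  obtain ⟨hne, -, -⟩ := id hinit
  obtain ⟨s1, hs1⟩ := hne
  have hcnn : ∀ s a, 0 ≤ c s a := by
    intro s a
    by_cases h : s ∈ T
    · rw [hc0 s h a]
    · linarith [hc1 s h a]
  set σ : Strategy S A Z M.obs := M.stratAllowFrom T M.suppInitF with hσ
  have hTA : ∀ s0 : S, M.TAllow T c s0 M.suppInitF = (M.resetDirac s0).Val c σ := by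
    intro s0; rw [hσ]; rfl
  have hTA_le : ∀ s0 ∈ M.suppInitF, M.TAllow T c s0 M.suppInitF ≤ M.UAllow T c := by
    intro s0 hs0
    have h1 : M.TAllow T c s0 M.suppInitF ≤ ⨆ s ∈ M.suppInitF, M.TAllow T c s M.suppInitF :=
      le_iSup_of_le s0 (le_iSup_of_le hs0 le_rfl)
    have h2 : (⨆ s ∈ M.suppInitF, M.TAllow T c s M.suppInitF) ≤ M.UAllow T c :=
      le_iSup_of_le M.suppInitF (le_iSup_of_le hinit le_rfl)
    exact h1.trans h2
  have hU0 : (0 : EReal) ≤ M.UAllow T c := by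
    refine le_trans ?_ (hTA_le s1 hs1)
    rw [hTA s1]
    exact POMDP.val_nonneg (M.resetDirac s1) c σ hcnn
  have hbot : M.UAllow T c ≠ ⊥ := by
    intro hb
    rw [hb] at hU0
    exact absurd hU0 (by simp)
  set u := (M.UAllow T c).toReal with hu'
  have hu : (u : EReal) = M.UAllow T c := EReal.coe_toReal htop hbot
  have hmem : ∀ s0 : S, 0 < M.init s0 → s0 ∈ M.suppInitF := by
    intro s0 h
    simp [POMDP.suppInitF, h]
  have hεstep : ∀ ε : ℝ, 0 < ε → M.Val c σ ≤ ((u + ε : ℝ) : EReal) := by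
    intro ε hε
    have hev : ∀ s0 ∈ M.suppInitF, ∀ᶠ n in atTop,
        (M.resetDirac s0).expTotalSteps c σ n < u + ε := by
      intro s0 hs0
      have hlim : (M.resetDirac s0).Val c σ < ((u + ε : ℝ) : EReal) := by
        have hle : (M.resetDirac s0).Val c σ ≤ (u : EReal) := by
          rw [← hTA s0]
          exact (hTA_le s0 hs0).trans hu.symm.le
        refine lt_of_le_of_lt hle ?_
        exact_mod_cast (by linarith : u < u + ε)
      have h3 := Filter.eventually_lt_of_limsup_lt hlim
      filter_upwards [h3] with n hn
      exact_mod_cast hn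
    have hev2 := (Filter.eventually_all_finset M.suppInitF).2 hev
    refine Filter.limsup_le_of_le (by isBoundedDefault) ?_
    filter_upwards [hev2] with n hn
    have hb : M.expTotalSteps c σ n ≤ u + ε := by
      rw [POMDP.expTotalSteps_dirac]
      calc ∑ s0 : S, M.init s0 * (M.resetDirac s0).expTotalSteps c σ n
          ≤ ∑ s0 : S, M.init s0 * (u + ε) := by
            refine Finset.sum_le_sum fun s0 _ => ?_
            rcases eq_or_lt_of_le (M.init_nonneg s0) with h0 | h0
            · rw [← h0, zero_mul, zero_mul]
            · exact mul_le_mul_of_nonneg_left (le_of_lt (hn s0 (hmem s0 h0)))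
                (M.init_nonneg s0)
        _ = u + ε := by rw [← Finset.sum_mul, M.init_sum, one_mul]
    exact_mod_cast hb
  have hval : M.Val c σ ≤ (u : EReal) := by
    by_contra hcon
    push_neg at hcon
    obtain ⟨z, hz1, hz2⟩ := EReal.exists_between_coe_real hcon
    have hz3 : u < z := by exact_mod_cast hz1
    have h4 := hεstep (z - u) (by linarith)
    rw [show u + (z - u) = z by ring] at h4
    exact absurd (lt_of_le_of_lt h4 hz2) (lt_irrefl _)
  have hAS : M.AlmostSure T σ :=
    POMDP.almostSure_of_val_lt_top M T c σ hcnn hc1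
      (lt_of_le_of_lt hval (EReal.coe_lt_top u))
  have hopt : M.optCost T c ≤ M.Val c σ := by
    unfold POMDP.optCost
    exact iInf_le (fun σ' : {σ' : Strategy S A Z M.obs // M.AlmostSure T σ'} => M.Val c σ'.1)
      ⟨σ, hAS⟩
  exact hopt.trans (hval.trans hu.le)
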